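/- Suppose K satisfies hypotheses (H) and let M be a K-ℵ₁-saturated L-structure. Then the complete theory of M has quantifier elimination: for every L-formula φ(x̄) there is a quantifier-free L-formula ψ(x̄) in the same free variables such that M ⊨ ∀x̄ (φ(x̄) ↔ ψ(x̄)), and hence every model of Th(M) satisfies ∀x̄ (φ(x̄) ↔ ψ(x̄)). -/

import Mathlib

open FirstOrder FirstOrder.Language CategoryTheory Cardinal Set

namespace FraisseFreeAmalg

variable (L : FirstOrder.Language.{0, 0})

/-- The class is closed under isomorphism. -/
def IsoClosed (K : Set (Bundled.{0} L.Structure)) : Prop :=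
  ∀ A ∈ K, ∀ B : Bundled.{0} L.Structure, Nonempty (A ≃[L] B) → B ∈ K

/-- All members of the class are finite or countably infinite. -/
def SmallMembers (K : Set (Bundled.{0} L.Structure)) : Prop :=
  ∀ A ∈ K, Countable A

/-- Condition (1) of (H): universal axiomatizability. -/
def UnivAx (K : Set (Bundled.{0} L.Structure)) : Prop :=
  ∀ A : Bundled.{0} L.Structure, Countable A → A ∉ K →
    ∃ (n : ℕ) (φ : L.Formula (Fin n)) (a : Fin n → A),
      φ.IsQF ∧ φ.Realize a ∧ ∀ B ∈ K, ∀ b : Fin n → B, ¬ φ.Realize b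

/-- Condition (2) of (H): quantifier elimination. -/
def QElim (K : Set (Bundled.{0} L.Structure)) : Prop :=
  ∀ (m n : ℕ) (φ : L.Formula (Fin m ⊕ Fin n)), φ.IsQF →
    ∀ A ∈ K, ∀ (a : Fin m → A) (b : Fin n → A), φ.Realize (Sum.elim a b) →
      ∃ ψ : L.Formula (Fin m), ψ.IsQF ∧ ψ.Realize a ∧
        ∀ A' ∈ K, ∀ a' : Fin m → A', ψ.Realize a' →
          ∃ B' ∈ K, ∃ (i : A' ↪[L] B') (b' : Fin n → B'),
            φ.Realize (Sum.elim (fun k => i (a' k)) b')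

/-- `D` together with `iA, iB` is a free amalgam of `A` and `B` over `C` in the class `K`. -/
def IsFreeAmalgam (K : Set (Bundled.{0} L.Structure))
    (C A B : Bundled.{0} L.Structure) (cA : C ↪[L] A) (cB : C ↪[L] B)
    (D : Bundled.{0} L.Structure) (iA : A ↪[L] D) (iB : B ↪[L] D) : Prop :=
  (∀ c : C, iA (cA c) = iB (cB c)) ∧
  (Set.range iA ∩ Set.range iB = Set.range fun c : C => iA (cA c)) ∧
  Substructure.closure L (Set.range iA ∪ Set.range iB) = ⊤ ∧
  ∀ D' ∈ K, ∀ (φA : A →[L] D') (φB : B →[L] D'),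
    (∀ c : C, φA (cA c) = φB (cB c)) →
    ∃! φ : D →[L] D',
      (∀ a : A, φ (iA a) = φA a) ∧ (∀ b : B, φ (iB b) = φB b)

/-- Condition (3) of (H): free amalgamation (together with agreement on the
substructures generated by the constants). -/
def FreeAmalg (K : Set (Bundled.{0} L.Structure)) : Prop :=
  (∀ A ∈ K, ∀ B ∈ K,
      Nonempty ((⊥ : L.Substructure A) ≃[L] (⊥ : L.Substructure B))) ∧
  ∀ (C A B : Bundled.{0} L.Structure), C ∈ K → A ∈ K → B ∈ K →
    ∀ (cA : C ↪[L] A) (cB : C ↪[L] B),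
      ∃ D ∈ K, ∃ (iA : A ↪[L] D) (iB : B ↪[L] D),
        IsFreeAmalgam L K C A B cA cB D iA iB

/-- Condition (4) of (H): generic element. -/
def GenericElem (K : Set (Bundled.{0} L.Structure)) : Prop :=
  ∃ X ∈ K, ∃ x : X, Substructure.closure L ({x} : Set X) = ⊤ ∧
    ∀ A ∈ K, ∀ a : A, ∃ φ : X →[L] A, φ x = a

/-- Condition (5) of (H): algebraically independent 3-amalgamation. -/
def ThreeAmalg (K : Set (Bundled.{0} L.Structure)) : Prop :=
  ∀ (E A B : Bundled.{0} L.Structure) (Bb Dd : Fin 2 → Bundled.{0} L.Structure),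
    E ∈ K → A ∈ K → B ∈ K → (∀ i, Bb i ∈ K) → (∀ i, Dd i ∈ K) →
    ∀ (eA : E ↪[L] A) (eB : ∀ i, E ↪[L] Bb i)
      (aD : ∀ i, A ↪[L] Dd i) (bD : ∀ i, Bb i ↪[L] Dd i)
      (bB : ∀ i, Bb i ↪[L] B),
      (∀ i, ∀ e : E, aD i (eA e) = bD i (eB i e)) →
      (∀ e : E, bB 0 (eB 0 e) = bB 1 (eB 1 e)) →
      (∀ i, Set.range (aD i) ∩ Set.range (bD i) =
        Set.range fun e : E => aD i (eA e)) →
      (Set.range (bB 0) ∩ Set.range (bB 1) =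
        Set.range fun e : E => bB 0 (eB 0 e)) →
      ∃ D ∈ K, ∃ (dD : ∀ i, Dd i ↪[L] D) (jB : B ↪[L] D),
        (∀ i, ∀ b : Bb i, dD i (bD i b) = jB (bB i b)) ∧
        (∀ a : A, dD 0 (aD 0 a) = dD 1 (aD 1 a)) ∧
        (∀ i, Set.range (dD i) ∩ Set.range jB =
          Set.range fun b : Bb i => dD i (bD i b)) ∧
        (Set.range (dD 0) ∩ Set.range (dD 1) =
          Set.range fun a : A => dD 0 (aD 0 a))

/-- The hypotheses (H) on the class `K`. -/
structure HypH (K : Set (Bundled.{0} L.Structure)) : Prop where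
  small : SmallMembers L K
  isoClosed : IsoClosed L K
  univAx : UnivAx L K
  qElim : QElim L K
  freeAmalg : FreeAmalg L K
  generic : GenericElem L K
  threeAmalg : ThreeAmalg L K

/-- `M` is `K`-ℵ₁-saturated. -/
def KSat (K : Set (Bundled.{0} L.Structure)) (M : Type) [L.Structure M] : Prop :=
  (∀ S : L.Substructure M, Cardinal.mk S < Cardinal.aleph 1 → (Bundled.of (↥S) : Bundled L.Structure) ∈ K) ∧
  ∀ U ∈ K, ∀ B ∈ K, ∀ (f₀ : U ↪[L] M) (f₁ : U ↪[L] B),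
    ∃ g : B ↪[L] M, ∀ u : U, g (f₁ u) = f₀ u

/-- Γ-independence of countable substructures of `M`. -/
def GammaIndep (M : Type) [L.Structure M] (E A B : L.Substructure M) : Prop :=
  ∀ D' : L.Substructure M, Countable D' →
    ∀ (φA : A →[L] D') (φB : B →[L] D'),
      (∀ (x : M) (hA : x ∈ A) (hB : x ∈ B), x ∈ E → φA ⟨x, hA⟩ = φB ⟨x, hB⟩) →
      ∃! φ : ↥(A ⊔ B) →[L] D',
        (∀ (x : M) (h : x ∈ A), φ ⟨x, (le_sup_left : A ≤ A ⊔ B) h⟩ = φA ⟨x, h⟩) ∧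
        (∀ (x : M) (h : x ∈ B), φ ⟨x, (le_sup_right : B ≤ A ⊔ B) h⟩ = φB ⟨x, h⟩)

/-- M-independence: forcing base monotonicity on algebraic independence. -/
def MIndep (M : Type) [L.Structure M] (E A B : L.Substructure M) : Prop :=
  ∀ C : L.Substructure M, E ≤ C → C ≤ B → (A ⊔ C) ⊓ B = C


section Aux

variable {L} {α β : Type*}

lemma realize_qf_embedding {A B : Type*} [L.Structure A] [L.Structure B]
    {φ : L.Formula α} (h : φ.IsQF) (f : A ↪[L] B) {v : α → A} :
    φ.Realize (⇑f ∘ v) ↔ φ.Realize v := by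
  have h2 := h.realize_embedding f (v := v) (xs := (default : Fin 0 → A))
  rw [Formula.Realize, Formula.Realize]
  rw [show ⇑f ∘ (default : Fin 0 → A) = (default : Fin 0 → B) from funext fun i => i.elim0] at h2
  exact h2

lemma countable_closure (hL : Countable L.Symbols) {M : Type} [L.Structure M]
    {s : Set M} (hs : s.Countable) : Countable (Substructure.closure L s) := by
  haveI : Countable L.Symbols := hL
  haveI : Countable (Σ l, L.Functions l) :=
    (Sum.inl_injective (α := Σ l, L.Functions l) (β := Σ n, L.Relations n)).countable
  exact hs.substructure_closure L

lemma isQF_foldr {l : List (L.Formula α)} (h : ∀ ψ ∈ l, ψ.IsQF) :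
    (l.foldr (· ⊔ ·) ⊥ : L.Formula α).IsQF := by
  induction l with
  | nil => exact BoundedFormula.isQF_bot
  | cons a t ih =>
    exact (h a List.mem_cons_self).sup (ih fun ψ hψ => h ψ (List.mem_cons_of_mem _ hψ))

lemma realize_foldr {M : Type} [L.Structure M] {l : List (L.Formula α)} {v : α → M} :
    (l.foldr (· ⊔ ·) ⊥ : L.Formula α).Realize v ↔ ∃ ψ ∈ l, ψ.Realize v := by
  induction l with
  | nil => simp [Formula.Realize]
  | cons a t ih => simp [Formula.realize_sup, ih, List.mem_cons]

lemma isQF_toFormula {k : ℕ} {φ : L.BoundedFormula α k} (h : φ.IsQF) : φ.toFormula.IsQF := by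
  induction h with
  | falsum => exact BoundedFormula.isQF_bot
  | of_isAtomic h =>
    cases h with
    | equal t u => exact (BoundedFormula.IsAtomic.equal _ _).isQF
    | rel R ts => exact (BoundedFormula.IsAtomic.rel _ _).isQF
  | imp _ _ ih1 ih2 => exact ih1.imp ih2

lemma isQF_formula_relabel {g : α → β} {φ : L.Formula α} (h : φ.IsQF) :
    (φ.relabel g).IsQF := h.relabel _

variable {K : Set (Bundled.{0} L.Structure)} {M : Type} [L.Structure M]

/-- Countably generated substructures of `M` belong to `K`. -/
lemma closure_mem_K (hL : Countable L.Symbols) (hM : KSat L K M) {s : Set M}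
    (hs : s.Countable) :
    (Bundled.of (↥(Substructure.closure L s)) : Bundled L.Structure) ∈ K := by
  haveI := countable_closure hL hs
  exact hM.1 _ (lt_of_le_of_lt Cardinal.mk_le_aleph0 (by simpa using Cardinal.aleph0_lt_aleph_one))

/-- Finitely generated substructures of any model of `Th(M)` belong to `K`. -/
lemma closure_mem_K_of_model (hL : Countable L.Symbols) (hK : HypH L K) (hM : KSat L K M)
    {N : Type} [L.Structure N] [hN : N ⊨ L.completeTheory M] {γ : Type} [Finite γ] (v : γ → N) :
    (Bundled.of (↥(Substructure.closure L (Set.range v))) : Bundled L.Structure) ∈ K := by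
  by_contra hA
  haveI : Countable (Substructure.closure L (Set.range v)) :=
    countable_closure hL (Set.countable_range v)
  obtain ⟨m, χ, a, hχQF, hχa, hnone⟩ :=
    hK.univAx (Bundled.of (↥(Substructure.closure L (Set.range v)))) ‹_› hA
  set σ : L.Sentence := (χ.relabel (Sum.inr : Fin m → Empty ⊕ Fin m)).iExs (Fin m) with hσ
  have hNσ : N ⊨ σ := by
    rw [hσ, Sentence.Realize, Formula.realize_iExs]; simp only [Formula.realize_relabel]
    refine ⟨fun i => ((Substructure.closure L (Set.range v)).subtype (a i)), ?_⟩
    exact (realize_qf_embedding hχQF (Substructure.closure L (Set.range v)).subtype).2 hχa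
  have hMσ : M ⊨ σ := (realize_iff_of_model_completeTheory M N σ).1 hNσ
  rw [hσ, Sentence.Realize, Formula.realize_iExs] at hMσ; simp only [Formula.realize_relabel] at hMσ
  obtain ⟨b, hb⟩ := hMσ
  have hb' : χ.Realize b := hb
  refine hnone (Bundled.of (↥(Substructure.closure L (Set.range b))))
    (closure_mem_K hL hM (Set.countable_range b))
    (fun i => ⟨b i, Substructure.subset_closure (Set.mem_range_self i)⟩) ?_
  exact (realize_qf_embedding hχQF (Substructure.closure L (Set.range b)).subtype).1 hb'

/-- Key lemma: a witnessed existential in any model `N` of `Th(M)` yields a quantifier-free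
formula true of the parameters which, in `M`, guarantees a witness. -/
lemma key_ext (hL : Countable L.Symbols) (hK : HypH L K) (hM : KSat L K M)
    {N : Type} [L.Structure N] [hN : N ⊨ L.completeTheory M] {m : ℕ}
    {χ : L.Formula (Fin m ⊕ Fin 1)} (hχ : χ.IsQF)
    {a : Fin m → N} {xs : Fin 1 → N} (h : χ.Realize (Sum.elim a xs)) :
    ∃ ψ : L.Formula (Fin m), ψ.IsQF ∧ ψ.Realize a ∧
      ∀ a' : Fin m → M, ψ.Realize a' → ∃ xs' : Fin 1 → M, χ.Realize (Sum.elim a' xs') := by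
  classical
  set S := Substructure.closure L (Set.range (Sum.elim a xs)) with hSdef
  have hSK : (Bundled.of (↥S) : Bundled L.Structure) ∈ K :=
    closure_mem_K_of_model hL hK hM (Sum.elim a xs)
  set aS : Fin m → ↥S := fun i =>
    ⟨a i, Substructure.subset_closure ⟨Sum.inl i, rfl⟩⟩ with haS
  set xsS : Fin 1 → ↥S := fun i =>
    ⟨xs i, Substructure.subset_closure ⟨Sum.inr i, rfl⟩⟩ with hxsS
  have hcomp : Sum.elim a xs = ⇑S.subtype ∘ Sum.elim aS xsS := by
    funext i; cases i <;> rfl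
  have hreal : χ.Realize (Sum.elim aS xsS) := by
    rw [← realize_qf_embedding hχ S.subtype, ← hcomp]; exact h
  obtain ⟨ψ, hψQF, hψa, hext⟩ :=
    hK.qElim m 1 χ hχ (Bundled.of (↥S)) hSK aS xsS hreal
  refine ⟨ψ, hψQF, ?_, ?_⟩
  · have h2 := (realize_qf_embedding hψQF S.subtype (v := aS)).2 hψa
    have : ⇑S.subtype ∘ aS = a := by funext i; rfl
    rwa [this] at h2
  · intro a' ha'
    set A' := Substructure.closure L (Set.range a') with hA'def
    have hA'K : (Bundled.of (↥A') : Bundled L.Structure) ∈ K :=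
      closure_mem_K hL hM (Set.countable_range a')
    set a'' : Fin m → ↥A' := fun i =>
      ⟨a' i, Substructure.subset_closure (Set.mem_range_self i)⟩ with ha''
    have ha''r : ψ.Realize a'' := by
      rw [← realize_qf_embedding hψQF A'.subtype]
      exact ha'
    obtain ⟨B', hB'K, i, b', hb'⟩ := hext (Bundled.of (↥A')) hA'K a'' ha''r
    obtain ⟨g, hg⟩ := hM.2 (Bundled.of (↥A')) hA'K B' hB'K A'.subtype i
    refine ⟨⇑g ∘ b', ?_⟩
    have h2 := (realize_qf_embedding hχ g (v := Sum.elim (fun j => i (a'' j)) b')).2 hb'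
    have : ⇑g ∘ Sum.elim (fun j => i (a'' j)) b' = Sum.elim a' (⇑g ∘ b') := by
      funext j; cases j with
      | inl j => exact hg (a'' j)
      | inr j => rfl
    rwa [this] at h2

/-- Elimination of a single existential quantifier over `M`, by compactness. -/
lemma ex_elim (hL : Countable L.Symbols) (hK : HypH L K) (hM : KSat L K M) [Nonempty M]
    {m : ℕ} {χ : L.Formula (Fin m ⊕ Fin 1)} (hχ : χ.IsQF) :
    ∃ ψ : L.Formula (Fin m), ψ.IsQF ∧
      ∀ a : Fin m → M, (∃ xs : Fin 1 → M, χ.Realize (Sum.elim a xs)) ↔ ψ.Realize a := by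
  classical
  set Sg : Set (L.Formula (Fin m)) :=
    {ψ | ψ.IsQF ∧ ∀ a : Fin m → M, ψ.Realize a → ∃ xs : Fin 1 → M, χ.Realize (Sum.elim a xs)}
    with hSg
  set exχ : L.Formula (Fin m) := χ.iExs (Fin 1) with hexχ
  have hexχ_realize : ∀ {P : Type} [inst : L.Structure P] (v : Fin m → P),
      exχ.Realize v ↔ ∃ xs : Fin 1 → P, χ.Realize (Sum.elim v xs) := by
    intro P inst v
    rw [hexχ, Formula.realize_iExs]
  set T' : (L[[Fin m]]).Theory :=
    (L.lhomWithConstants (Fin m)).onTheory (L.completeTheory M) ∪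
      ({σ | ∃ ψ ∈ Sg, σ = Formula.equivSentence ψ.not} ∪ {Formula.equivSentence exχ})
    with hT'
  have hunsat : ¬ T'.IsSatisfiable := by
    rintro ⟨N⟩
    letI : L.Structure N := (L.lhomWithConstants (Fin m)).reduct N
    haveI : (L.lhomWithConstants (Fin m)).IsExpansionOn N :=
      LHom.isExpansionOn_reduct _ _
    haveI hNM : (N : Type) ⊨ L.completeTheory M :=
      (LHom.onTheory_model _ _).1 (N.is_model.mono Set.subset_union_left)
    set a : Fin m → N := fun i => ((L.con i : _) : N) with ha
    have hexa : exχ.Realize a := by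
      have h1 : (N : Type) ⊨ Formula.equivSentence exχ :=
        T'.realize_sentence_of_mem
          (Set.mem_union_right _ (Set.mem_union_right _ rfl))
      rw [Formula.realize_equivSentence] at h1
      exact h1
    obtain ⟨xs, hxs⟩ := (hexχ_realize a).1 hexa
    obtain ⟨ψ, hψQF, hψa, hψgood⟩ := key_ext hL hK hM (N := N) hχ hxs
    have hmem : Formula.equivSentence ψ.not ∈ T' :=
      Set.mem_union_right _ (Set.mem_union_left _ ⟨ψ, ⟨hψQF, hψgood⟩, rfl⟩)
    have h2 : (N : Type) ⊨ Formula.equivSentence ψ.not := T'.realize_sentence_of_mem hmem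
    rw [Formula.realize_equivSentence, Formula.realize_not] at h2
    exact h2 hψa
  have hnfs : ¬ T'.IsFinitelySatisfiable := fun h =>
    hunsat (Theory.isSatisfiable_iff_isFinitelySatisfiable.2 h)
  rw [Theory.IsFinitelySatisfiable] at hnfs
  push_neg at hnfs
  obtain ⟨T0, hsub, hT0⟩ := hnfs
  set f : (L[[Fin m]]).Sentence → L.Formula (Fin m) := fun σ =>
    if h : ∃ ψ ∈ Sg, σ = Formula.equivSentence ψ.not then h.choose else ⊥ with hf
  set lst : List (L.Formula (Fin m)) := (T0.image f).toList with hlst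
  have hlst_mem : ∀ ρ ∈ lst, ρ ∈ Sg ∨ ρ = ⊥ := by
    intro ρ hρ
    rw [hlst, Finset.mem_toList, Finset.mem_image] at hρ
    obtain ⟨σ, hσ, rfl⟩ := hρ
    by_cases h : ∃ ψ ∈ Sg, σ = Formula.equivSentence ψ.not
    · left
      have : f σ = h.choose := by simp only [hf]; rw [dif_pos h]
      rw [this]
      exact h.choose_spec.1
    · right
      simp only [hf]
      rw [dif_neg h]
  refine ⟨lst.foldr (· ⊔ ·) ⊥, isQF_foldr ?_, fun a => ⟨?_, ?_⟩⟩
  · intro ρ hρ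
    rcases hlst_mem ρ hρ with h | rfl
    · exact h.1
    · exact BoundedFormula.isQF_bot
  · rintro ⟨xs, hxs⟩
    by_contra hnot
    have hall : ∀ ρ ∈ lst, ¬ ρ.Realize a := fun ρ hρ hρa =>
      hnot (realize_foldr.2 ⟨ρ, hρ, hρa⟩)
    letI : (constantsOn (Fin m)).Structure M := constantsOn.structure a
    haveI : M ⊨ (L.lhomWithConstants (Fin m)).onTheory (L.completeTheory M) :=
      (LHom.onTheory_model _ _).2 inferInstance
    have hmod : M ⊨ (↑T0 : (L[[Fin m]]).Theory) := by
      rw [Theory.model_iff]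
      intro σ hσ
      rcases hsub hσ with honT | hrest
      · exact Theory.realize_sentence_of_mem _ honT
      rcases hrest with hmid | hlast
      · obtain ⟨ψ, hψSg, rfl⟩ := hmid
        have hfσ : f (Formula.equivSentence ψ.not) ∈ lst := by
          rw [hlst, Finset.mem_toList]
          exact Finset.mem_image_of_mem f hσ
        have hcond : ∃ ψ' ∈ Sg, Formula.equivSentence ψ.not = Formula.equivSentence ψ'.not :=
          ⟨ψ, hψSg, rfl⟩
        have hfeq : Formula.equivSentence ψ.not =
            Formula.equivSentence ((f (Formula.equivSentence ψ.not)).not) := by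
          have : f (Formula.equivSentence ψ.not) = hcond.choose := by
            simp only [hf]; rw [dif_pos hcond]
          rw [this]
          exact hcond.choose_spec.2
        rw [hfeq]
        refine (Formula.realize_equivSentence M _).2 ?_
        rw [Formula.realize_not]
        exact hall _ hfσ
      · rw [Set.mem_singleton_iff] at hlast
        subst hlast
        exact (Formula.realize_equivSentence M _).2 ((hexχ_realize a).2 ⟨xs, hxs⟩)
    haveI := hmod
    exact hT0 ⟨Theory.ModelType.of _ M⟩
  · intro hfold
    obtain ⟨ρ, hρ, hρa⟩ := realize_foldr.1 hfold
    rcases hlst_mem ρ hρ with h | rfl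
    · exact h.2 a hρa
    · exact absurd hρa (by simp [Formula.Realize])

lemma realize_bf0 {M' : Type*} [L.Structure M'] {φ : L.BoundedFormula α 0} {v : α → M'}
    (xs : Fin 0 → M') : φ.Realize v xs ↔ φ.Realize v default := by
  rw [show xs = default from funext fun i => i.elim0]

/-- Elimination of a bounded existential quantifier over `M`. -/
lemma all_case (hL : Countable L.Symbols) (hK : HypH L K) (hM : KSat L K M) [Nonempty M]
    {n k : ℕ} {θ : L.BoundedFormula (Fin n) (k+1)} (hθ : θ.IsQF) :
    ∃ σ : L.BoundedFormula (Fin n) k, σ.IsQF ∧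
      ∀ (v : Fin n → M) (xs : Fin k → M),
        σ.Realize v xs ↔ ∃ x : M, θ.Realize v (Fin.snoc xs x) := by
  classical
  let e : (Fin n ⊕ Fin (k+1)) ≃ (Fin (n+k) ⊕ Fin 1) :=
    (Equiv.sumCongr (Equiv.refl (Fin n)) finSumFinEquiv.symm).trans
      ((Equiv.sumAssoc (Fin n) (Fin k) (Fin 1)).symm.trans
        (Equiv.sumCongr finSumFinEquiv (Equiv.refl (Fin 1))))
  let χ : L.Formula (Fin (n+k) ⊕ Fin 1) := θ.toFormula.relabel e
  have hχQF : χ.IsQF := isQF_formula_relabel (isQF_toFormula hθ)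
  have hlast : (Fin.last k) = Fin.natAdd k (0 : Fin 1) := by
    ext; simp
  have hχreal : ∀ (u : Fin (n+k) → M) (ys : Fin 1 → M),
      χ.Realize (Sum.elim u ys) ↔
        θ.Realize (fun i => u (finSumFinEquiv (Sum.inl i)))
          (Fin.snoc (fun j => u (finSumFinEquiv (Sum.inr j))) (ys 0)) := by
    intro u ys
    rw [show χ = θ.toFormula.relabel e from rfl, Formula.realize_relabel,
      BoundedFormula.realize_toFormula]
    have h1 : (Sum.elim u ys ∘ ⇑e) ∘ Sum.inl = fun i => u (finSumFinEquiv (Sum.inl i)) := by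
      funext i
      simp [e]
    have h2 : (Sum.elim u ys ∘ ⇑e) ∘ Sum.inr =
        Fin.snoc (fun j => u (finSumFinEquiv (Sum.inr j))) (ys 0) := by
      funext j
      refine Fin.lastCases ?_ (fun jj => ?_) j
      · simp only [Function.comp_apply, Fin.snoc_last]
        rw [hlast]
        simp [e]
      · simp only [Function.comp_apply, Fin.snoc_castSucc]
        rw [show (Fin.castSucc jj) = Fin.castAdd 1 jj from rfl]
        simp [e]
    rw [h1, h2]
  obtain ⟨ψ', hψ'QF, hψ'⟩ := ex_elim hL hK hM hχQF
  let ρ : L.Formula (Fin n ⊕ Fin k) := ψ'.relabel ⇑finSumFinEquiv.symm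
  let σ : L.BoundedFormula (Fin n) k :=
    BoundedFormula.relabel (id : Fin n ⊕ Fin k → (Fin n) ⊕ Fin k) ρ
  have hσQF : σ.IsQF := (isQF_formula_relabel hψ'QF).relabel _
  refine ⟨σ, hσQF, fun v xs => ?_⟩
  have hw : (Sum.elim v ((xs : Fin (k+0) → M) ∘ Fin.castAdd 0) ∘ id) = Sum.elim v xs := by
    funext p
    cases p with
    | inl i => rfl
    | inr i => rfl
  have h1 : σ.Realize v xs ↔ ψ'.Realize (Sum.elim v xs ∘ ⇑finSumFinEquiv.symm) := by
    rw [show σ = BoundedFormula.relabel id ρ from rfl, BoundedFormula.realize_relabel,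
      realize_bf0, hw]
    exact Formula.realize_relabel
  rw [h1, ← hψ' (Sum.elim v xs ∘ ⇑finSumFinEquiv.symm)]
  constructor
  · rintro ⟨ys, hys⟩
    refine ⟨ys 0, ?_⟩
    have := (hχreal _ ys).1 hys
    have hv : (fun i => (Sum.elim v xs ∘ ⇑finSumFinEquiv.symm) (finSumFinEquiv (Sum.inl i))) = v := by
      funext i; simp
    have hx : (fun j => (Sum.elim v xs ∘ ⇑finSumFinEquiv.symm) (finSumFinEquiv (Sum.inr j))) = xs := by
      funext j; simp
    rwa [hv, hx] at this
  · rintro ⟨x, hx⟩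
    refine ⟨fun _ => x, (hχreal _ _).2 ?_⟩
    have hv : (fun i => (Sum.elim v xs ∘ ⇑finSumFinEquiv.symm) (finSumFinEquiv (Sum.inl i))) = v := by
      funext i; simp
    have hx2 : (fun j => (Sum.elim v xs ∘ ⇑finSumFinEquiv.symm) (finSumFinEquiv (Sum.inr j))) = xs := by
      funext j; simp
    rw [hv, hx2]
    exact hx

/-- Quantifier elimination over `M` for bounded formulas. -/
lemma qe_bf (hL : Countable L.Symbols) (hK : HypH L K) (hM : KSat L K M) [Nonempty M]
    {n k : ℕ} (φ : L.BoundedFormula (Fin n) k) :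
    ∃ ψ : L.BoundedFormula (Fin n) k, ψ.IsQF ∧
      ∀ (v : Fin n → M) (xs : Fin k → M), φ.Realize v xs ↔ ψ.Realize v xs := by
  induction φ with
  | falsum => exact ⟨_, BoundedFormula.isQF_bot, fun v xs => Iff.rfl⟩
  | equal t u => exact ⟨_, (BoundedFormula.IsAtomic.equal t u).isQF, fun v xs => Iff.rfl⟩
  | rel R ts => exact ⟨_, (BoundedFormula.IsAtomic.rel R ts).isQF, fun v xs => Iff.rfl⟩
  | imp φ₁ φ₂ ih₁ ih₂ =>
    obtain ⟨ψ₁, h₁, e₁⟩ := ih₁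
    obtain ⟨ψ₂, h₂, e₂⟩ := ih₂
    exact ⟨ψ₁.imp ψ₂, h₁.imp h₂, fun v xs => by
      simp only [BoundedFormula.realize_imp, e₁ v xs, e₂ v xs]⟩
  | all φ' ih =>
    obtain ⟨ψ, hψ, eψ⟩ := ih
    obtain ⟨σ, hσ, eσ⟩ := all_case hL hK hM (θ := ψ.not) hψ.not
    refine ⟨σ.not, hσ.not, fun v xs => ?_⟩
    rw [BoundedFormula.realize_all, BoundedFormula.realize_not, eσ]
    push_neg
    constructor
    · intro h x
      rw [BoundedFormula.realize_not, not_not]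
      exact (eψ v _).1 (h x)
    · intro h x
      have := h x
      rw [BoundedFormula.realize_not, not_not] at this
      exact (eψ v _).2 this

end Aux

/-- Under (H), the complete theory of a `K`-ℵ₁-saturated structure
has quantifier elimination. -/
theorem statement_5 (L : FirstOrder.Language.{0, 0}) (hL : Countable L.Symbols)
    (K : Set (Bundled.{0} L.Structure)) (hK : HypH L K)
    (M : Type) [L.Structure M] (hM : KSat L K M)
    (n : ℕ) (φ : L.Formula (Fin n)) :
    ∃ ψ : L.Formula (Fin n), ψ.IsQF ∧
      (∀ a : Fin n → M, φ.Realize a ↔ ψ.Realize a) ∧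
      ∀ (N : Type) [L.Structure N], N ⊨ L.completeTheory M →
        ∀ a : Fin n → N, φ.Realize a ↔ ψ.Realize a := by
  classical
  rcases isEmpty_or_nonempty M with hE | hNE
  · by_cases hφ : ∀ a : Fin n → M, φ.Realize a
    · refine ⟨⊤, BoundedFormula.IsQF.top, fun a => by simp [hφ a], ?_⟩
      intro N _ hN a
      haveI := hN
      have hMτ : M ⊨ ((φ.relabel (Sum.inr : Fin n → Empty ⊕ Fin n)).iAlls (Fin n)) := by
        rw [Sentence.Realize, Formula.realize_iAlls]; simp only [Formula.realize_relabel]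
        intro x
        exact hφ x
      have hNτ := (realize_iff_of_model_completeTheory M N _).2 hMτ
      rw [Sentence.Realize, Formula.realize_iAlls] at hNτ; simp only [Formula.realize_relabel] at hNτ
      simpa using hNτ a
    · obtain ⟨a₀, ha₀⟩ := not_forall.1 hφ
      have hnone : ∀ a : Fin n → M, ¬ φ.Realize a := by
        intro a ha
        exact ha₀ (by rwa [show a₀ = a from funext fun i => isEmptyElim (a i)])
      refine ⟨⊥, BoundedFormula.isQF_bot, fun a => by
        simp only [Formula.Realize, BoundedFormula.realize_bot, iff_false]
        exact hnone a, ?_⟩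
      intro N _ hN a
      haveI := hN
      have hMτ : M ⊨ (((φ.not).relabel (Sum.inr : Fin n → Empty ⊕ Fin n)).iAlls (Fin n)) := by
        rw [Sentence.Realize, Formula.realize_iAlls]; simp only [Formula.realize_relabel]
        intro x
        rw [Formula.realize_not]
        exact hnone x
      have hNτ := (realize_iff_of_model_completeTheory M N _).2 hMτ
      rw [Sentence.Realize, Formula.realize_iAlls] at hNτ; simp only [Formula.realize_relabel] at hNτ
      have := hNτ a
      rw [Formula.realize_not] at this
      simp only [Formula.Realize, BoundedFormula.realize_bot, iff_false]
      exact this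
  · obtain ⟨ψ, hψQF, hψ⟩ := qe_bf hL hK hM (k := 0) φ
    have hMiff : ∀ a : Fin n → M, Formula.Realize φ a ↔ Formula.Realize ψ a := fun a => hψ a default
    refine ⟨ψ, hψQF, hMiff, ?_⟩
    intro N _ hN a
    haveI := hN
    have hMτ : M ⊨ (((φ.iff ψ).relabel (Sum.inr : Fin n → Empty ⊕ Fin n)).iAlls (Fin n)) := by
      rw [Sentence.Realize, Formula.realize_iAlls]; simp only [Formula.realize_relabel]
      intro x
      rw [Formula.realize_iff]
      exact hMiff x
    have hNτ := (realize_iff_of_model_completeTheory M N _).2 hMτ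
    rw [Sentence.Realize, Formula.realize_iAlls] at hNτ; simp only [Formula.realize_relabel] at hNτ
    have := hNτ a
    rw [Formula.realize_iff] at this
    exact this

end FraisseFreeAmalg
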